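/- Let i ∈ [0, N−1] and let J′ ⊆ K_i be a nonempty set such that the (singleton) sets S_j \ S_i, j ∈ J′, are pairwise disjoint. Let m ∈ [0, N−1] be the index with S_m = (⋃_{j∈J′} (S_j \ S_i)) ∪ (S_i ∩ ⋂_{j∈J′} S_j). Then i ⪯ m; consequently, if I ⊆ [0, N−1] satisfies the Partial Order Property and i ∈ I, then m ∈ I. -/

import Mathlib

noncomputable section
open scoped Classical
open Finset

/-- The 2×2 binary matrix [[1,0],[1,1]], as an ℕ-indexed function (zero outside range). -/
def G2 (a b : ℕ) : ZMod 2 :=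
  if a = 0 ∧ b = 0 then 1
  else if a = 1 ∧ b = 0 then 1
  else if a = 1 ∧ b = 1 then 1
  else 0

/-- `G n i c` is the (i,c) entry of the n-th Kronecker power over F₂ of [[1,0],[1,1]],
for row/column indices i, c ∈ [0, 2^n − 1] (standard row-major index flattening). -/
def G : ℕ → ℕ → ℕ → ZMod 2
  | 0 => fun i c => if i = 0 ∧ c = 0 then 1 else 0
  | n + 1 => fun i c => G2 (i / 2 ^ n) (c / 2 ^ n) * G n (i % 2 ^ n) (c % 2 ^ n)

/-- Row i of the polar transform G_N (N = 2^n), as a vector of its coordinates. -/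
def g (n i : ℕ) : ℕ → ZMod 2 := fun c => G n i c

/-- S_i ⊆ [0, n−1]: the support of the binary representation of i. -/
def S (n i : ℕ) : Finset ℕ := (Finset.range n).filter fun a => i.testBit a

/-- T_i = [0, n−1] \ S_i. -/
def T (n i : ℕ) : Finset ℕ := Finset.range n \ S n i

/-- Hamming weight of a vector whose coordinates are indexed by [0, 2^n − 1]. -/
def wt (n : ℕ) (v : ℕ → ZMod 2) : ℕ :=
  ((Finset.range (2 ^ n)).filter fun c => v c ≠ 0).card

/-- The index in [0, 2^n − 1] whose binary support is the set U ⊆ [0, n−1]. -/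
def idx (U : Finset ℕ) : ℕ := ∑ a ∈ U, 2 ^ a

/-- K_i = {j ∈ [i+1, N−1] : w(g_j) ≥ w(g_i ⊕ g_j) and w(g_i ⊕ g_j) = w(g_i)}. -/
def K (n i : ℕ) : Finset ℕ :=
  (Finset.Ico (i + 1) (2 ^ n)).filter fun j =>
    wt n (g n i + g n j) ≤ wt n (g n j) ∧ wt n (g n i + g n j) = wt n (g n i)

/-- One generating step of the partial order on [0, 2^n − 1]. -/
def poStep (n i j : ℕ) : Prop :=
  i < 2 ^ n ∧ j < 2 ^ n ∧
    (S n i ⊆ S n j ∨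
      ∃ a b, a ∈ S n i ∧ b ∉ S n i ∧ a < b ∧ S n j = insert b (S n i \ {a}))

/-- The partial order ⪯: reflexive–transitive closure of the generating relation. -/
def po (n : ℕ) : ℕ → ℕ → Prop := Relation.ReflTransGen (poStep n)

/-- Partial Order Property of an information set I ⊆ [0, 2^n − 1]. -/
def POP (n : ℕ) (I : Finset ℕ) : Prop :=
  ∀ i ∈ I, ∀ j, j < 2 ^ n → po n i j → j ∈ I

/-- The code C(I): all F₂-linear combinations (i.e. subset sums) of the rows g_i, i ∈ I. -/
def codewords (n : ℕ) (I : Finset ℕ) : Finset (ℕ → ZMod 2) :=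
  I.powerset.image fun H => ∑ h ∈ H, g n h

/-- A_w(I): the number of codewords of C(I) of Hamming weight w. -/
def A (n : ℕ) (I : Finset ℕ) (w : ℕ) : ℕ :=
  ((codewords n I).filter fun v => wt n v = w).card

/-- The coset C_i(I) = {g_i ⊕ ⊕_{h∈H} g_h : H ⊆ I \ [0,i]}. -/
def coset (n : ℕ) (I : Finset ℕ) (i : ℕ) : Finset (ℕ → ZMod 2) :=
  ((I.filter fun h => i < h).powerset).image fun H => g n i + ∑ h ∈ H, g n h

/-- A_{i,w}(I): the number of vectors of Hamming weight w in the coset C_i(I). -/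
def Ai (n : ℕ) (I : Finset ℕ) (i w : ℕ) : ℕ :=
  ((coset n I i).filter fun v => wt n v = w).card

lemma S_subset_range (n i : ℕ) : S n i ⊆ Finset.range n :=
  Finset.filter_subset _ _

lemma mem_S {n i a : ℕ} : a ∈ S n i ↔ a < n ∧ i.testBit a := by
  simp [S]

lemma twoPowSum (n : ℕ) : ∑ a ∈ Finset.range n, 2 ^ a = 2 ^ n - 1 := by
  induction n with
  | zero => simp
  | succ k ih =>
    rw [Finset.sum_range_succ, ih, pow_succ]
    have : 0 < 2 ^ k := Nat.pow_pos (by norm_num)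
    omega

lemma idx_lt_of_subset {n : ℕ} {U : Finset ℕ} (h : U ⊆ Finset.range n) : idx U < 2 ^ n := by
  have h1 : idx U ≤ ∑ a ∈ Finset.range n, 2 ^ a := by
    apply Finset.sum_le_sum_of_subset h
  rw [twoPowSum] at h1
  have : 0 < 2 ^ n := Nat.pow_pos (by norm_num)
  omega

lemma testBit_idx (U : Finset ℕ) : ∀ a, (idx U).testBit a ↔ a ∈ U := by
  induction U using Finset.strongInductionOn with
  | _ U ih =>
    intro a
    rcases U.eq_empty_or_nonempty with rfl | hne
    · simp [idx]
    · set b := U.max' hne with hbdef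
      have hbU : b ∈ U := U.max'_mem hne
      have hUe : U = insert b (U.erase b) := (Finset.insert_erase hbU).symm
      have hsub : U.erase b ⊆ Finset.range b := by
        intro x hx
        rw [Finset.mem_range]
        have hxb : x ≠ b := Finset.ne_of_mem_erase hx
        have : x ≤ b := Finset.le_max' _ _ (Finset.mem_of_mem_erase hx)
        omega
      have hlt : idx (U.erase b) < 2 ^ b := idx_lt_of_subset hsub
      have hidx : idx U = 2 ^ b + idx (U.erase b) := by
        conv_lhs => rw [hUe]
        exact Finset.sum_insert (Finset.notMem_erase _ _)
      rcases lt_trichotomy a b with h | rfl | h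
      · rw [hidx, Nat.testBit_two_pow_add_gt h,
          ih (U.erase b) (Finset.erase_ssubset hbU) a]
        constructor
        · exact fun hx => Finset.mem_of_mem_erase hx
        · intro hx; exact Finset.mem_erase.2 ⟨by omega, hx⟩
      · rw [hidx, Nat.testBit_two_pow_add_eq, Nat.testBit_lt_two_pow hlt]
        simpa using hbU
      · have hUlt : idx U < 2 ^ a := by
          have h1 : 2 ^ b + idx (U.erase b) < 2 ^ (b + 1) := by rw [pow_succ]; omega
          have h2 : 2 ^ (b + 1) ≤ 2 ^ a := Nat.pow_le_pow_right (by norm_num) (by omega)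
          omega
        rw [Nat.testBit_lt_two_pow hUlt]
        simp only [Bool.false_eq_true, false_iff]
        intro hx
        exact absurd (Finset.le_max' _ _ hx) (by omega)

lemma S_idx {n : ℕ} {U : Finset ℕ} (h : U ⊆ Finset.range n) : S n (idx U) = U := by
  ext a
  rw [mem_S, ← testBit_idx]
  constructor
  · tauto
  · intro ha
    exact ⟨Finset.mem_range.1 (h ((testBit_idx U a).1 ha)), ha⟩

lemma idx_S {n i : ℕ} (hi : i < 2 ^ n) : idx (S n i) = i := by
  apply Nat.eq_of_testBit_eq
  intro a
  rw [Bool.eq_iff_iff, testBit_idx, mem_S]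
  constructor
  · tauto
  · intro hb
    refine ⟨?_, hb⟩
    by_contra han
    have hlt : i < 2 ^ a :=
      lt_of_lt_of_le hi (Nat.pow_le_pow_right (by norm_num) (by omega))
    rw [Nat.testBit_lt_two_pow hlt] at hb
    simp at hb

lemma S_succ (n x : ℕ) (hx : x < 2 ^ (n + 1)) :
    ∀ a, a ∈ S (n + 1) x ↔ a ∈ S n (x % 2 ^ n) ∨ (a = n ∧ x / 2 ^ n = 1) := by
  have hdiv : x / 2 ^ n < 2 := by
    rw [Nat.div_lt_iff_lt_mul (Nat.pow_pos (n := n) (by norm_num : 0 < 2))]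
    rw [pow_succ] at hx; omega
  intro a
  rw [mem_S, mem_S, Nat.testBit_mod_two_pow]
  constructor
  · rintro ⟨ha, hb⟩
    rcases Nat.lt_or_ge a n with h | h
    · left; exact ⟨h, by simp [h, hb]⟩
    · right
      have han : a = n := by omega
      subst han
      refine ⟨rfl, ?_⟩
      rw [Nat.testBit_eq_decide_div_mod_eq] at hb
      simp only [decide_eq_true_eq] at hb
      have hcase : x / 2 ^ a = 0 ∨ x / 2 ^ a = 1 := by
        rcases Nat.lt_or_ge (x / 2 ^ a) 1 with h | h
        · exact Or.inl (Nat.lt_one_iff.mp h)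
        · exact Or.inr (le_antisymm (by omega) h)
      rcases hcase with h0 | h1
      · rw [h0] at hb; simp at hb
      · exact h1
  · rintro (⟨ha, hb⟩ | ⟨rfl, hb⟩)
    · simp only [ha, decide_true, Bool.true_and] at hb
      exact ⟨by omega, hb⟩
    · refine ⟨by omega, ?_⟩
      rw [Nat.testBit_eq_decide_div_mod_eq]
      simp [hb]

lemma G2_cases (a b : ℕ) (ha : a < 2) (hb : b < 2) :
    G2 a b = if b ≤ a then 1 else 0 := by
  interval_cases a <;> interval_cases b <;> simp [G2]

lemma G_eq : ∀ n i c, i < 2 ^ n → c < 2 ^ n → G n i c = if S n c ⊆ S n i then 1 else 0 := by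
  intro n
  induction n with
  | zero =>
    intro i c hi hc
    interval_cases i
    interval_cases c
    simp [G, S]
  | succ k ih =>
    intro i c hi hc
    have hpos : 0 < 2 ^ k := Nat.pow_pos (by norm_num)
    have hik : i % 2 ^ k < 2 ^ k := Nat.mod_lt _ hpos
    have hck : c % 2 ^ k < 2 ^ k := Nat.mod_lt _ hpos
    have hi2 : i / 2 ^ k < 2 := by
      rw [Nat.div_lt_iff_lt_mul hpos]; rw [pow_succ] at hi; omega
    have hc2 : c / 2 ^ k < 2 := by
      rw [Nat.div_lt_iff_lt_mul hpos]; rw [pow_succ] at hc; omega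
    have hG : G (k + 1) i c = G2 (i / 2 ^ k) (c / 2 ^ k) * G k (i % 2 ^ k) (c % 2 ^ k) := rfl
    rw [hG, ih _ _ hik hck, G2_cases _ _ hi2 hc2]
    have hsub : (S (k + 1) c ⊆ S (k + 1) i) ↔
        (S k (c % 2 ^ k) ⊆ S k (i % 2 ^ k) ∧ c / 2 ^ k ≤ i / 2 ^ k) := by
      constructor
      · intro h
        constructor
        · intro a ha
          have halt : a < k := (mem_S.1 ha).1
          have ha' : a ∈ S (k + 1) c := (S_succ k c hc a).mpr (Or.inl ha)
          rcases (S_succ k i hi a).mp (h ha') with h1 | h1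
          · exact h1
          · omega
        · rcases Nat.lt_or_ge (c / 2 ^ k) 1 with h1 | h1
          · rw [Nat.lt_one_iff.mp h1]; exact Nat.zero_le _
          · have hcd : c / 2 ^ k = 1 := by omega
            have hk : k ∈ S (k + 1) c := (S_succ k c hc k).mpr (Or.inr ⟨rfl, hcd⟩)
            rcases (S_succ k i hi k).mp (h hk) with h2 | h2
            · have := (mem_S.1 h2).1; omega
            · rw [hcd, h2.2]
      · rintro ⟨h1, h2⟩ a ha
        rcases (S_succ k c hc a).mp ha with h | h
        · exact (S_succ k i hi a).mpr (Or.inl (h1 h))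
        · exact (S_succ k i hi a).mpr (Or.inr ⟨h.1, by omega⟩)
    simp only [hsub]
    by_cases h1 : S k (c % 2 ^ k) ⊆ S k (i % 2 ^ k) <;>
      by_cases h2 : c / 2 ^ k ≤ i / 2 ^ k <;> simp [h1, h2]

lemma count_subsets {n : ℕ} {W : Finset ℕ} (hW : W ⊆ Finset.range n) :
    ((Finset.range (2 ^ n)).filter fun c => S n c ⊆ W).card = 2 ^ W.card := by
  rw [← Finset.card_powerset]
  apply Finset.card_bij (fun c _ => S n c)
  · intro c hc
    simp only [Finset.mem_filter] at hc
    exact Finset.mem_powerset.2 hc.2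
  · intro c1 h1 c2 h2 he
    simp only [Finset.mem_filter, Finset.mem_range] at h1 h2
    have := congrArg idx he
    rwa [idx_S h1.1, idx_S h2.1] at this
  · intro U hU
    rw [Finset.mem_powerset] at hU
    have hUr : U ⊆ Finset.range n := hU.trans hW
    refine ⟨idx U, ?_, S_idx hUr⟩
    simp only [Finset.mem_filter, Finset.mem_range]
    exact ⟨idx_lt_of_subset hUr, by rw [S_idx hUr]; exact hU⟩

lemma wt_g {n i : ℕ} (hi : i < 2 ^ n) : wt n (g n i) = 2 ^ (S n i).card := by
  rw [← count_subsets (S_subset_range n i)]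
  unfold wt
  congr 1
  apply Finset.filter_congr
  intro c hc
  simp only [Finset.mem_range] at hc
  show g n i c ≠ 0 ↔ S n c ⊆ S n i
  rw [show g n i c = G n i c from rfl, G_eq n i c hi hc]
  by_cases h : S n c ⊆ S n i <;> simp [h]

lemma wt_add {n i j : ℕ} (hi : i < 2 ^ n) (hj : j < 2 ^ n) :
    wt n (g n i + g n j) + 2 * 2 ^ (S n i ∩ S n j).card
      = 2 ^ (S n i).card + 2 ^ (S n j).card := by
  set R := Finset.range (2 ^ n) with hR
  set P : ℕ → Prop := fun c => S n c ⊆ S n i with hP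
  set Q : ℕ → Prop := fun c => S n c ⊆ S n j with hQ
  have hPc : (R.filter P).card = 2 ^ (S n i).card := count_subsets (S_subset_range n i)
  have hQc : (R.filter Q).card = 2 ^ (S n j).card := count_subsets (S_subset_range n j)
  have hPQc : (R.filter fun c => P c ∧ Q c).card = 2 ^ (S n i ∩ S n j).card := by
    rw [← count_subsets ((Finset.inter_subset_left).trans (S_subset_range n i))]
    congr 1
    apply Finset.filter_congr
    intro c _
    rw [Finset.subset_inter_iff]
  have split1 : (R.filter fun c => P c ∧ Q c).card + (R.filter fun c => P c ∧ ¬ Q c).card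
      = (R.filter P).card := by
    rw [← Finset.filter_filter, ← Finset.filter_filter]
    exact Finset.card_filter_add_card_filter_not _
  have split2 : (R.filter fun c => Q c ∧ P c).card + (R.filter fun c => Q c ∧ ¬ P c).card
      = (R.filter Q).card := by
    rw [← Finset.filter_filter, ← Finset.filter_filter]
    exact Finset.card_filter_add_card_filter_not _
  have hcomm : (R.filter fun c => Q c ∧ P c).card = (R.filter fun c => P c ∧ Q c).card := by
    congr 1; apply Finset.filter_congr; intro c _; tauto
  have hwt : wt n (g n i + g n j)
      = (R.filter fun c => P c ∧ ¬ Q c).card + (R.filter fun c => Q c ∧ ¬ P c).card := by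
    rw [← Finset.card_union_of_disjoint, ← Finset.filter_or]
    · unfold wt
      congr 1
      apply Finset.filter_congr
      intro c hc
      simp only [Finset.mem_range, hR] at hc
      show (g n i + g n j) c ≠ 0 ↔ _
      have h1 : g n i c = if S n c ⊆ S n i then 1 else 0 := G_eq n i c hi hc
      have h2 : g n j c = if S n c ⊆ S n j then 1 else 0 := G_eq n j c hj hc
      show (g n i c + g n j c ≠ 0) ↔ _
      rw [h1, h2]
      simp only [hP, hQ]
      by_cases p : S n c ⊆ S n i <;> by_cases q : S n c ⊆ S n j <;> simp [p, q] <;> decide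
    · rw [Finset.disjoint_left]
      intro x hx hx'
      simp only [Finset.mem_filter] at hx hx'
      tauto
  omega

lemma K_struct {n i j : ℕ} (hi : i < 2 ^ n) (hj : j ∈ K n i) :
    i < j ∧ j < 2 ^ n ∧ (S n j \ S n i).card = 1 ∧ (S n i \ S n j).card ≤ 1 := by
  rw [K, Finset.mem_filter, Finset.mem_Ico] at hj
  obtain ⟨⟨hij, hj2⟩, hle, heq⟩ := hj
  have hwi := wt_g hi
  have hwj := wt_g hj2
  have hadd := wt_add hi hj2
  have hq2 : 2 ^ (S n j).card = 2 * 2 ^ (S n i ∩ S n j).card := by omega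
  have hq : (S n j).card = (S n i ∩ S n j).card + 1 := by
    apply Nat.pow_right_injective (le_refl 2)
    show (2:ℕ) ^ (S n j).card = 2 ^ ((S n i ∩ S n j).card + 1)
    rw [hq2, pow_succ]; ring
  have hp2 : 2 ^ (S n i).card ≤ 2 * 2 ^ (S n i ∩ S n j).card := by omega
  have hp : (S n i).card ≤ (S n i ∩ S n j).card + 1 := by
    by_contra h
    have h2 : 2 ^ ((S n i ∩ S n j).card + 2) ≤ 2 ^ (S n i).card :=
      Nat.pow_le_pow_right (by norm_num) (by omega)
    rw [pow_succ, pow_succ] at h2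
    have : 0 < 2 ^ (S n i ∩ S n j).card := Nat.pow_pos (by norm_num)
    omega
  have e1 := Finset.card_inter_add_card_sdiff (S n j) (S n i)
  have e2 := Finset.card_inter_add_card_sdiff (S n i) (S n j)
  rw [Finset.inter_comm] at e1
  exact ⟨lt_of_lt_of_le (Nat.lt_succ_self i) hij, hj2, by omega, by omega⟩

lemma swap_struct {n i j a b : ℕ} (hi : i < 2 ^ n) (hj2 : j < 2 ^ n) (hij : i < j)
    (ha : S n i \ S n j = {a}) (hb : S n j \ S n i = {b}) :
    a < b ∧ S n j = insert b (S n i \ {a}) := by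
  have haS : a ∈ S n i ∧ a ∉ S n j := by
    have : a ∈ S n i \ S n j := by rw [ha]; exact Finset.mem_singleton_self a
    exact ⟨(Finset.mem_sdiff.1 this).1, (Finset.mem_sdiff.1 this).2⟩
  have hbS : b ∈ S n j ∧ b ∉ S n i := by
    have : b ∈ S n j \ S n i := by rw [hb]; exact Finset.mem_singleton_self b
    exact ⟨(Finset.mem_sdiff.1 this).1, (Finset.mem_sdiff.1 this).2⟩
  have hset : S n j = insert b (S n i \ {a}) := by
    have h1 : S n i \ {a} = S n i ∩ S n j := by
      rw [← ha, Finset.sdiff_sdiff_self_left]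
    rw [h1, Finset.insert_eq, ← hb, Finset.inter_comm]
    exact (Finset.sdiff_union_inter _ _).symm
  refine ⟨?_, hset⟩
  have hbnot : b ∉ S n i \ {a} := fun hc => hbS.2 (Finset.mem_sdiff.1 hc).1
  have hanot : a ∉ S n i \ {a} := fun hc => (Finset.mem_sdiff.1 hc).2 (Finset.mem_singleton_self a)
  have hins : S n i = insert a (S n i \ {a}) := by
    rw [Finset.sdiff_singleton_eq_erase, Finset.insert_erase haS.1]
  have hji : idx (S n j) = 2 ^ b + idx (S n i \ {a}) := by
    rw [hset]
    exact Finset.sum_insert hbnot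
  have hii : idx (S n i) = 2 ^ a + idx (S n i \ {a}) := by
    conv_lhs => rw [hins]
    exact Finset.sum_insert hanot
  have hij' : idx (S n i) < idx (S n j) := by
    rw [idx_S hi, idx_S hj2]; exact hij
  rw [hji, hii] at hij'
  have hpow : 2 ^ a < 2 ^ b := by omega
  by_contra h
  have : 2 ^ b ≤ 2 ^ a := Nat.pow_le_pow_right (by norm_num) (by omega)
  omega

/-- The intermediate set in the chain construction. -/
def Fset (n i : ℕ) (J'' : Finset ℕ) : Finset ℕ :=
  (S n i \ J''.biUnion fun j => S n i \ S n j) ∪ J''.biUnion fun j => S n j \ S n i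

lemma Fset_subset_range (n i : ℕ) (J'' : Finset ℕ) : Fset n i J'' ⊆ Finset.range n := by
  intro x hx
  rcases Finset.mem_union.1 hx with h | h
  · exact S_subset_range n i (Finset.mem_sdiff.1 h).1
  · obtain ⟨j, _, hj⟩ := Finset.mem_biUnion.1 h
    exact S_subset_range n j (Finset.mem_sdiff.1 hj).1

lemma chain_po (n i : ℕ) (hi : i < 2 ^ n) (J' : Finset ℕ) (hJ' : J' ⊆ K n i)
    (hdisj : ∀ j ∈ J', ∀ j' ∈ J', j ≠ j' → Disjoint (S n j \ S n i) (S n j' \ S n i)) :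
    ∀ J'' ⊆ J', po n i (idx (Fset n i J'')) := by
  intro J''
  induction J'' using Finset.induction_on with
  | empty =>
    intro _
    have h0 : Fset n i ∅ = S n i := by simp [Fset]
    rw [h0, idx_S hi]
    exact Relation.ReflTransGen.refl
  | @insert j J'' hjJ ih =>
    intro hsub
    have hjJ' : j ∈ J' := hsub (Finset.mem_insert_self j J'')
    have hJ''sub : J'' ⊆ J' := fun x hx => hsub (Finset.mem_insert_of_mem hx)
    obtain ⟨hij, hj2, hcard1, hcard2⟩ := K_struct hi (hJ' hjJ')
    obtain ⟨b, hb⟩ := Finset.card_eq_one.1 hcard1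
    have hbS : b ∈ S n j ∧ b ∉ S n i := by
      have h : b ∈ S n j \ S n i := by rw [hb]; exact Finset.mem_singleton_self b
      exact ⟨(Finset.mem_sdiff.1 h).1, (Finset.mem_sdiff.1 h).2⟩
    have hbB : b ∉ J''.biUnion fun j' => S n j' \ S n i := by
      intro hc
      obtain ⟨j', hj'J, hj'mem⟩ := Finset.mem_biUnion.1 hc
      have hne : j ≠ j' := fun h => hjJ (h ▸ hj'J)
      have hd := hdisj j hjJ' j' (hJ''sub hj'J) hne
      rw [hb] at hd
      exact (Finset.disjoint_left.1 hd (Finset.mem_singleton_self b)) hj'mem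
    have hBnotS : ∀ x ∈ (J''.biUnion fun j' => S n j' \ S n i), x ∉ S n i := by
      intro x hx
      obtain ⟨j', _, hj'mem⟩ := Finset.mem_biUnion.1 hx
      exact (Finset.mem_sdiff.1 hj'mem).2
    have hcur : S n (idx (Fset n i J'')) = Fset n i J'' := S_idx (Fset_subset_range n i J'')
    have hnew : S n (idx (Fset n i (insert j J''))) = Fset n i (insert j J'') :=
      S_idx (Fset_subset_range n i _)
    have hclt : idx (Fset n i J'') < 2 ^ n := idx_lt_of_subset (Fset_subset_range n i J'')
    have hnlt : idx (Fset n i (insert j J'')) < 2 ^ n :=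
      idx_lt_of_subset (Fset_subset_range n i _)
    refine Relation.ReflTransGen.tail (ih hJ''sub) ⟨hclt, hnlt, ?_⟩
    by_cases hswap : ∃ a, S n i \ S n j = {a} ∧ a ∉ J''.biUnion fun j' => S n i \ S n j'
    · obtain ⟨a, ha, haA⟩ := hswap
      have hab := (swap_struct hi hj2 hij ha hb).1
      have haS : a ∈ S n i := by
        have h : a ∈ S n i \ S n j := by rw [ha]; exact Finset.mem_singleton_self a
        exact (Finset.mem_sdiff.1 h).1
      right
      refine ⟨a, b, ?_, ?_, hab, ?_⟩
      · rw [hcur]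
        exact Finset.mem_union_left _ (Finset.mem_sdiff.2 ⟨haS, haA⟩)
      · rw [hcur]
        intro hc
        rcases Finset.mem_union.1 hc with h | h
        · exact hbS.2 (Finset.mem_sdiff.1 h).1
        · exact hbB h
      · rw [hcur, hnew]
        ext x
        have hxa : x ∈ J''.biUnion (fun j' => S n j' \ S n i) → x ≠ a :=
          fun hx h => hBnotS x hx (h ▸ haS)
        simp only [Fset, Finset.biUnion_insert, ha, hb, Finset.mem_union, Finset.mem_sdiff,
          Finset.mem_insert, Finset.mem_singleton, not_or]
        tauto
    · left
      rw [hcur, hnew]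
      intro x hx
      rcases Finset.mem_union.1 hx with h | h
      · obtain ⟨hx1, hx2⟩ := Finset.mem_sdiff.1 h
        apply Finset.mem_union_left
        apply Finset.mem_sdiff.2
        refine ⟨hx1, ?_⟩
        rw [Finset.biUnion_insert]
        intro hc
        rcases Finset.mem_union.1 hc with h' | h'
        · apply hswap
          refine ⟨x, ?_, hx2⟩
          apply Finset.eq_singleton_iff_unique_mem.2
          exact ⟨h', fun y hy => Finset.card_le_one.1 hcard2 y hy x h'⟩
        · exact hx2 h'
      · apply Finset.mem_union_right
        rw [Finset.biUnion_insert]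
        exact Finset.mem_union_right _ h

/-- if J′ ⊆ K_i is nonempty with pairwise disjoint sets S_j \ S_i, and
S_m = (⋃_{j∈J′} S_j \ S_i) ∪ (S_i ∩ ⋂_{j∈J′} S_j), then i ⪯ m; consequently, if I
satisfies POP and i ∈ I then m ∈ I. -/
theorem M_construction_po (n : ℕ) (hn : 1 ≤ n) (i : ℕ) (hi : i < 2 ^ n)
    (J' : Finset ℕ) (hJ' : J' ⊆ K n i) (hne : J'.Nonempty)
    (hdisj : ∀ j ∈ J', ∀ j' ∈ J', j ≠ j' → Disjoint (S n j \ S n i) (S n j' \ S n i))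
    (m : ℕ) (hm : m < 2 ^ n)
    (hSm : S n m = (J'.biUnion fun j => S n j \ S n i) ∪ (S n i ∩ J'.inf' hne fun j => S n j)) :
    po n i m ∧ ∀ I : Finset ℕ, POP n I → i ∈ I → m ∈ I := by
  have hchain := chain_po n i hi J' hJ' hdisj J' (Finset.Subset.refl J')
  have hflt : idx (Fset n i J') < 2 ^ n := idx_lt_of_subset (Fset_subset_range n i J')
  have hfS : S n (idx (Fset n i J')) = Fset n i J' := S_idx (Fset_subset_range n i J')
  have hfin : Fset n i J' ⊆ S n m := by
    rw [hSm]
    intro x hx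
    rcases Finset.mem_union.1 hx with h | h
    · obtain ⟨hx1, hx2⟩ := Finset.mem_sdiff.1 h
      apply Finset.mem_union_right
      apply Finset.mem_inter.2
      refine ⟨hx1, ?_⟩
      have hle : S n i \ (J'.biUnion fun j => S n i \ S n j) ≤ J'.inf' hne fun j => S n j := by
        apply Finset.le_inf' hne
        intro j hj
        intro y hy
        obtain ⟨hy1, hy2⟩ := Finset.mem_sdiff.1 hy
        by_contra hc
        exact hy2 (Finset.mem_biUnion.2 ⟨j, hj, Finset.mem_sdiff.2 ⟨hy1, hc⟩⟩)
      exact hle (Finset.mem_sdiff.2 ⟨hx1, hx2⟩)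
    · exact Finset.mem_union_left _ h
  have hstep : poStep n (idx (Fset n i J')) m :=
    ⟨hflt, hm, Or.inl (by rw [hfS]; exact hfin)⟩
  have hpo : po n i m := Relation.ReflTransGen.tail hchain hstep
  exact ⟨hpo, fun I hPOP hiI => hPOP i hiI m hm hpo⟩
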